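/- For odd n ≥ 5, the cycle C_n is not a 2-threshold graph: there is no pair of thresholds θ_1 < θ_2 and rank function r such that two vertices of C_n are adjacent if and only if their rank sum lies in [θ_1, θ_2). -/

import Mathlib

open Fin.CommRing in
/-- For odd n ≥ 5, Cₙ is not a 2-threshold graph. -/
theorem cn_odd_not_two_threshold (n : ℕ) (hn : 5 ≤ n) (hodd : Odd n) :
    ¬ ∃ (θ₁ θ₂ : ℝ), θ₁ < θ₂ ∧ ∃ r : Fin n → ℝ, ∀ u v : Fin n, u ≠ v →
      ((SimpleGraph.cycleGraph n).Adj u v ↔ θ₁ ≤ r u + r v ∧ r u + r v < θ₂) := by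
  obtain ⟨m, rfl⟩ : ∃ m, n = m + 2 := ⟨n - 2, by omega⟩
  rintro ⟨θ₁, θ₂, hθ, r, hr⟩
  have v1 : ((1 : Fin (m+2)) : ℕ) = 1 := by
    rw [Fin.val_one']
    exact Nat.mod_eq_of_lt (by omega)
  have v0 : ((0 : Fin (m+2)) : ℕ) = 0 := rfl
  have e2 : ((1 + 1 : Fin (m+2)) : ℕ) = 2 := by
    rw [Fin.val_add, v1]
    exact Nat.mod_eq_of_lt (by omega)
  have e3 : ((1 + 1 + 1 : Fin (m+2)) : ℕ) = 3 := by
    rw [Fin.val_add, e2, v1]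
    exact Nat.mod_eq_of_lt (by omega)
  have h1 : (1 : Fin (m+2)) ≠ 0 := by
    intro h; have := congrArg Fin.val h; rw [v1, v0] at this; omega
  have h2 : (1 + 1 : Fin (m+2)) ≠ 1 := by
    intro h; have := congrArg Fin.val h; rw [e2, v1] at this; omega
  have h2' : (1 + 1 : Fin (m+2)) ≠ 0 := by
    intro h; have := congrArg Fin.val h; rw [e2, v0] at this; omega
  have h3 : (1 + 1 + 1 : Fin (m+2)) ≠ 0 := by
    intro h; have := congrArg Fin.val h; rw [e3, v0] at this; omega
  have hne1 : ∀ i : Fin (m+2), i ≠ i + 1 := by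
    intro i h; exact h1 (by linear_combination -h)
  have hne2 : ∀ i : Fin (m+2), i ≠ i + 1 + 1 := by
    intro i h; exact h2' (by linear_combination -h)
  have hadj : ∀ i : Fin (m+2), (SimpleGraph.cycleGraph (m+2)).Adj i (i + 1) := by
    intro i
    rw [SimpleGraph.cycleGraph_adj]
    right; ring
  have hnadj : ∀ i : Fin (m+2), ¬ (SimpleGraph.cycleGraph (m+2)).Adj i (i + 1 + 1) := by
    intro i h
    rw [SimpleGraph.cycleGraph_adj] at h
    rcases h with h | h
    · exact h3 (by linear_combination -h)
    · exact h2 (by linear_combination h)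
  have hedge : ∀ i : Fin (m+2), θ₁ ≤ r i + r (i + 1) ∧ r i + r (i + 1) < θ₂ := by
    intro i
    exact (hr i (i + 1) (hne1 i)).mp (hadj i)
  have hnon : ∀ i : Fin (m+2), ¬ (θ₁ ≤ r i + r (i + 1 + 1) ∧ r i + r (i + 1 + 1) < θ₂) := by
    intro i h
    exact hnadj i ((hr i (i + 1 + 1) (hne2 i)).mpr h)
  set P : Fin (m+2) → Prop := fun i => r i < r (i + 1) with hP
  have hstep : ∀ i : Fin (m+2), P (i + 1) ↔ ¬ P i := by
    intro i
    have e1 := hedge i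
    have e2 := hedge (i + 1)
    have ne := hnon i
    simp only [hP]
    rcases lt_or_ge (r i + r (i + 1 + 1)) θ₁ with h | h
    · constructor
      · intro hlt; exfalso; linarith [e2.1]
      · intro hnp; exfalso; exact hnp (by linarith [e2.1])
    · rcases lt_or_ge (r i + r (i + 1 + 1)) θ₂ with h' | h'
      · exact absurd ⟨h, h'⟩ ne
      · constructor
        · intro _ hp; linarith [e2.2]
        · intro _; linarith [e1.2]
  have hiter : ∀ k : ℕ, (P ((k : Fin (m+2))) ↔ (Even k ↔ P 0)) := by
    intro k
    induction k with
    | zero => simp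
    | succ k ih =>
      have hc : ((k + 1 : ℕ) : Fin (m+2)) = (k : Fin (m+2)) + 1 := by push_cast; ring
      rw [hc, hstep, ih, Nat.even_add_one]
      tauto
  have hfin := hiter (m+2)
  rw [Fin.natCast_self] at hfin
  have hne : ¬ Even (m+2) := Nat.not_even_iff_odd.mpr hodd
  tauto
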